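/- Let Q ∈ ℝ^{n×n} be a symmetric PSD matrix with Q ⪯ e^{ε}Π for an orthogonal projection Π and ε ≤ 1/80. Let w̄ ∈ ℝ^n_{>0} with W̄ = diag(w̄), and suppose w̄ ≈_{3ε} μ·τ coordinatewise for some μ > 0 and τ ∈ ℝ^n_{>0} with diag(Π)_i ≤ 2τ_i for all i. Then for all h ∈ ℝ^n: ‖W̄^{-1/2} Q W̄^{1/2} h‖_τ ≤ e^{4ε}‖h‖_τ and ‖W̄^{-1/2} Q W̄^{1/2} h‖_∞ ≤ 2‖h‖_τ. -/

import Mathlib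

open Matrix

open Finset


private lemma herm_transpose {n : ℕ} {A : Matrix (Fin n) (Fin n) ℝ} (h : A.IsHermitian) :
    Aᵀ = A := by
  ext i j
  have := congrFun (congrFun h i) j
  simpa [Matrix.conjTranspose_apply] using this

private lemma dot_swap {n : ℕ} {A : Matrix (Fin n) (Fin n) ℝ} (hA : Aᵀ = A)
    (x y : Fin n → ℝ) : x ⬝ᵥ (A *ᵥ y) = (A *ᵥ x) ⬝ᵥ y := by
  rw [Matrix.dotProduct_mulVec, ← Matrix.mulVec_transpose, hA]

section facts
variable {n : ℕ} {Q Pmat : Matrix (Fin n) (Fin n) ℝ} {c : ℝ}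
open scoped MatrixOrder

private lemma proj_dot (hPsym : Pmat.IsSymm) (hPproj : Pmat * Pmat = Pmat)
    (x : Fin n → ℝ) : x ⬝ᵥ (Pmat *ᵥ x) ≤ x ⬝ᵥ x := by
  have h1 : x ⬝ᵥ (Pmat *ᵥ x) = (Pmat *ᵥ x) ⬝ᵥ (Pmat *ᵥ x) := by
    conv_lhs => rw [← hPproj, ← Matrix.mulVec_mulVec]
    rw [dot_swap hPsym]
  have hCS := Finset.sum_mul_sq_le_sq_mul_sq Finset.univ x (Pmat *ᵥ x)
  have h3 : ∑ i, x i * (Pmat *ᵥ x) i = ∑ i, (Pmat *ᵥ x) i ^ 2 := by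
    simpa [dotProduct, sq] using h1
  rw [h3] at hCS
  have h2 : 0 ≤ ∑ i, (Pmat *ᵥ x) i ^ 2 := Finset.sum_nonneg fun i _ => sq_nonneg _
  have h4 : (0:ℝ) ≤ ∑ i, x i ^ 2 := Finset.sum_nonneg fun i _ => sq_nonneg _
  have hgoal : ∑ i, (Pmat *ᵥ x) i ^ 2 ≤ ∑ i, x i ^ 2 := by
    rcases h2.eq_or_lt with h0 | h0
    · rw [← h0]; exact h4
    · rw [sq] at hCS
      exact le_of_mul_le_mul_right (by linarith) h0
  calc x ⬝ᵥ (Pmat *ᵥ x) = ∑ i, (Pmat *ᵥ x) i ^ 2 := by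
        simpa [dotProduct, sq] using h1
    _ ≤ ∑ i, x i ^ 2 := hgoal
    _ = x ⬝ᵥ x := by simp [dotProduct, sq]

private lemma Qdot_le (hQP : (c • Pmat - Q).PosSemidef) (hPsym : Pmat.IsSymm)
    (hPproj : Pmat * Pmat = Pmat) (hc : 0 ≤ c) (x : Fin n → ℝ) :
    x ⬝ᵥ (Q *ᵥ x) ≤ c * (x ⬝ᵥ x) := by
  have h1 : 0 ≤ x ⬝ᵥ ((c • Pmat - Q) *ᵥ x) := by simpa using hQP.dotProduct_mulVec_nonneg x
  rw [Matrix.sub_mulVec, Matrix.smul_mulVec, dotProduct_sub,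
    dotProduct_smul] at h1
  have h2 := proj_dot hPsym hPproj x
  have := mul_le_mul_of_nonneg_left h2 hc
  simp only [smul_eq_mul] at h1
  linarith

private lemma Qdiag_le (hQP : (c • Pmat - Q).PosSemidef) (i : Fin n) :
    Q i i ≤ c * Pmat i i := by
  have h1 : 0 ≤ (Pi.single i 1 : Fin n → ℝ) ⬝ᵥ ((c • Pmat - Q) *ᵥ Pi.single i 1) := by
    simpa using hQP.dotProduct_mulVec_nonneg (Pi.single i 1)
  rw [Matrix.sub_mulVec, Matrix.smul_mulVec, dotProduct_sub,
    dotProduct_smul, Matrix.mulVec_single_one, Matrix.mulVec_single_one] at h1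
  simp only [single_dotProduct, one_mul, Matrix.transpose_apply, smul_eq_mul,
    dotProduct, Pi.single_apply] at h1
  simp only [ite_mul, one_mul, zero_mul, Finset.sum_ite_eq, Finset.sum_ite_eq', Finset.mem_univ, if_true] at h1
  change 0 ≤ c * Pmat i i - Q i i at h1
  linarith

private lemma diag_nonneg {A : Matrix (Fin n) (Fin n) ℝ} (hA : A.PosSemidef) (i : Fin n) :
    0 ≤ A i i := by
  have h1 : 0 ≤ (Pi.single i 1 : Fin n → ℝ) ⬝ᵥ (A *ᵥ Pi.single i 1) := by
    simpa using hA.dotProduct_mulVec_nonneg (Pi.single i 1)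
  rw [Matrix.mulVec_single_one] at h1
  simpa [single_dotProduct] using h1

private lemma Qx_norm (hQ : Q.PosSemidef) (hQP : (c • Pmat - Q).PosSemidef)
    (hPsym : Pmat.IsSymm) (hPproj : Pmat * Pmat = Pmat) (hc : 0 ≤ c) (x : Fin n → ℝ) :
    (Q *ᵥ x) ⬝ᵥ (Q *ᵥ x) ≤ c ^ 2 * (x ⬝ᵥ x) := by
  have hRR : CFC.sqrt Q * CFC.sqrt Q = Q := CFC.sqrt_mul_sqrt_self Q hQ.nonneg
  set R := CFC.sqrt Q with hRdef
  have hRsym : Rᵀ = R := herm_transpose (CFC.sqrt_nonneg Q).posSemidef.1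
  have hQsym : Qᵀ = Q := herm_transpose hQ.1
  have hcomm : R * Q = Q * R := by rw [← hRR, ← mul_assoc, mul_assoc]
  have e0 : ∀ v : Fin n → ℝ, R *ᵥ (R *ᵥ v) = Q *ᵥ v := by
    intro v; rw [Matrix.mulVec_mulVec, hRR]
  have e1 : (Q *ᵥ x) ⬝ᵥ (Q *ᵥ x) = (R *ᵥ x) ⬝ᵥ (Q *ᵥ (R *ᵥ x)) := by
    calc (Q *ᵥ x) ⬝ᵥ (Q *ᵥ x) = x ⬝ᵥ (Q *ᵥ (Q *ᵥ x)) := (dot_swap hQsym _ _).symm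
      _ = x ⬝ᵥ (R *ᵥ (R *ᵥ (Q *ᵥ x))) := by rw [e0]
      _ = (R *ᵥ x) ⬝ᵥ (R *ᵥ (Q *ᵥ x)) := dot_swap hRsym _ _
      _ = (R *ᵥ x) ⬝ᵥ (Q *ᵥ (R *ᵥ x)) := by
          rw [Matrix.mulVec_mulVec, Matrix.mulVec_mulVec, hcomm]
  have e2 : (R *ᵥ x) ⬝ᵥ (R *ᵥ x) = x ⬝ᵥ (Q *ᵥ x) := by
    conv_rhs => rw [← e0]
    exact (dot_swap hRsym x (R *ᵥ x)).symm
  have h1 := Qdot_le hQP hPsym hPproj hc (R *ᵥ x)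
  have h2 := Qdot_le hQP hPsym hPproj hc x
  rw [e2] at h1
  rw [e1]
  calc (R *ᵥ x) ⬝ᵥ (Q *ᵥ (R *ᵥ x)) ≤ c * (x ⬝ᵥ (Q *ᵥ x)) := h1
    _ ≤ c * (c * (x ⬝ᵥ x)) := by exact mul_le_mul_of_nonneg_left h2 hc
    _ = c ^ 2 * (x ⬝ᵥ x) := by ring

private lemma Q_cs_diag (hQ : Q.PosSemidef) (i : Fin n) (x : Fin n → ℝ) :
    ((Q *ᵥ x) i) ^ 2 ≤ Q i i * (x ⬝ᵥ (Q *ᵥ x)) := by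
  have hRR : CFC.sqrt Q * CFC.sqrt Q = Q := CFC.sqrt_mul_sqrt_self Q hQ.nonneg
  set R := CFC.sqrt Q with hRdef
  have hRsym : Rᵀ = R := herm_transpose (CFC.sqrt_nonneg Q).posSemidef.1
  have e0 : R *ᵥ (R *ᵥ x) = Q *ᵥ x := by rw [Matrix.mulVec_mulVec, hRR]
  have e1 : (Q *ᵥ x) i = ∑ j, R i j * (R *ᵥ x) j := by
    rw [← e0]; rfl
  have hCS := Finset.sum_mul_sq_le_sq_mul_sq Finset.univ (fun j => R i j) (R *ᵥ x)
  have e2 : ∑ j, R i j ^ 2 = Q i i := by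
    rw [← hRR, Matrix.mul_apply]
    refine Finset.sum_congr rfl fun j _ => ?_
    have : R j i = R i j := by conv_lhs => rw [← hRsym, Matrix.transpose_apply]
    rw [this, sq]
  have e3 : ∑ j, (R *ᵥ x) j ^ 2 = x ⬝ᵥ (Q *ᵥ x) := by
    have : (R *ᵥ x) ⬝ᵥ (R *ᵥ x) = x ⬝ᵥ (Q *ᵥ x) := by
      conv_rhs => rw [← e0]
      exact (dot_swap hRsym x (R *ᵥ x)).symm
    simpa [dotProduct, sq] using this
  rw [e1]
  calc (∑ j, R i j * (R *ᵥ x) j) ^ 2 ≤ (∑ j, R i j ^ 2) * ∑ j, (R *ᵥ x) j ^ 2 := hCS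
    _ = Q i i * (x ⬝ᵥ (Q *ᵥ x)) := by rw [e2, e3]

end facts


/-- Bounds on `W̄^{-1/2} Q W̄^{1/2} h` in the `τ`-norm and the sup norm, for a PSD matrix `Q`
dominated by `e^ε` times an orthogonal projection. -/
theorem stmt11 (n : ℕ) (Q Pmat : Matrix (Fin n) (Fin n) ℝ) (hQ : Q.PosSemidef)
    (hPsym : Pmat.IsSymm) (hPproj : Pmat * Pmat = Pmat)
    (ε : ℝ) (hε0 : 0 ≤ ε) (hε : ε ≤ 1/80)
    (hQP : (Real.exp ε • Pmat - Q).PosSemidef)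
    (w : Fin n → ℝ) (hw : ∀ i, 0 < w i)
    (μ : ℝ) (hμ : 0 < μ) (τ : Fin n → ℝ) (hτ : ∀ i, 0 < τ i)
    (hwτ : ∀ i, Real.exp (-(3 * ε)) * (μ * τ i) ≤ w i ∧ w i ≤ Real.exp (3 * ε) * (μ * τ i))
    (hPτ : ∀ i, Pmat i i ≤ 2 * τ i) :
    ∀ h : Fin n → ℝ,
      Real.sqrt (∑ i, τ i *
          (((Matrix.diagonal (fun i => (Real.sqrt (w i))⁻¹) * Q *
              Matrix.diagonal (fun i => Real.sqrt (w i))) *ᵥ h) i) ^ 2) ≤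
        Real.exp (4 * ε) * Real.sqrt (∑ i, τ i * h i ^ 2) ∧
      ‖(Matrix.diagonal (fun i => (Real.sqrt (w i))⁻¹) * Q *
          Matrix.diagonal (fun i => Real.sqrt (w i))) *ᵥ h‖ ≤
        2 * Real.sqrt (∑ i, τ i * h i ^ 2) := by
  intro h
  set c := Real.exp ε with hcdef
  have hc0 : (0:ℝ) < c := Real.exp_pos ε
  set d : Fin n → ℝ := fun i => Real.sqrt (w i) with hd
  have hd0 : ∀ i, 0 < d i := fun i => Real.sqrt_pos.2 (hw i)
  have hd2 : ∀ i, d i ^ 2 = w i := fun i => Real.sq_sqrt (hw i).le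
  set g : Fin n → ℝ := fun j => d j * h j with hg
  set S := ∑ i, τ i * h i ^ 2 with hS
  have hS0 : 0 ≤ S := Finset.sum_nonneg fun i _ => mul_nonneg (hτ i).le (sq_nonneg _)
  set M := Matrix.diagonal (fun i => (Real.sqrt (w i))⁻¹) * Q *
      Matrix.diagonal (fun i => Real.sqrt (w i)) with hM
  have hDh : (Matrix.diagonal (fun i => Real.sqrt (w i))) *ᵥ h = g := by
    ext j; rw [Matrix.mulVec_diagonal]
  have hv : ∀ i, (M *ᵥ h) i = (d i)⁻¹ * ((Q *ᵥ g) i) := by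
    intro i
    rw [hM, ← Matrix.mulVec_mulVec, ← Matrix.mulVec_mulVec, hDh, Matrix.mulVec_diagonal]
  -- numeric facts
  have hexp8 : Real.exp (8 * ε) ≤ 2 := by
    have hlog := Real.log_two_gt_d9
    calc Real.exp (8 * ε) ≤ Real.exp (Real.log 2) := Real.exp_le_exp.2 (by linarith)
      _ = 2 := Real.exp_log two_pos
  have hw1 : ∀ i, τ i * μ ≤ Real.exp (3 * ε) * w i := by
    intro i
    have h1 := (hwτ i).1
    have e : Real.exp (3 * ε) * Real.exp (-(3 * ε)) = 1 := by
      rw [← Real.exp_add]; simp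
    have h2 := mul_le_mul_of_nonneg_left h1 (Real.exp_pos (3 * ε)).le
    calc τ i * μ = Real.exp (3 * ε) * Real.exp (-(3 * ε)) * (μ * τ i) := by rw [e]; ring
      _ = Real.exp (3 * ε) * (Real.exp (-(3 * ε)) * (μ * τ i)) := by ring
      _ ≤ Real.exp (3 * ε) * w i := h2
  have hτdivw : ∀ i, τ i / w i ≤ Real.exp (3 * ε) / μ := by
    intro i
    rw [div_le_div_iff₀ (hw i) hμ]
    exact hw1 i
  have hgg : g ⬝ᵥ g ≤ Real.exp (3 * ε) * (μ * S) := by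
    calc g ⬝ᵥ g = ∑ j, w j * h j ^ 2 := by
          refine Finset.sum_congr rfl fun j _ => ?_
          show d j * h j * (d j * h j) = w j * h j ^ 2
          linear_combination h j ^ 2 * hd2 j
      _ ≤ ∑ j, Real.exp (3 * ε) * (μ * τ j) * h j ^ 2 :=
          Finset.sum_le_sum fun j _ => mul_le_mul_of_nonneg_right (hwτ j).2 (sq_nonneg _)
      _ = Real.exp (3 * ε) * (μ * S) := by
          rw [hS, Finset.mul_sum, Finset.mul_sum]
          exact Finset.sum_congr rfl fun j _ => by ring
  have hgQg0 : 0 ≤ g ⬝ᵥ (Q *ᵥ g) := by simpa using hQ.dotProduct_mulVec_nonneg g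
  have hgQg : g ⬝ᵥ (Q *ᵥ g) ≤ c * (Real.exp (3 * ε) * (μ * S)) := by
    calc g ⬝ᵥ (Q *ᵥ g) ≤ c * (g ⬝ᵥ g) := Qdot_le hQP hPsym hPproj hc0.le g
      _ ≤ c * (Real.exp (3 * ε) * (μ * S)) := mul_le_mul_of_nonneg_left hgg hc0.le
  -- part (a)
  have ha : ∑ i, τ i * ((M *ᵥ h) i) ^ 2 ≤ Real.exp (8 * ε) * S := by
    have term : ∀ i, τ i * ((M *ᵥ h) i) ^ 2 = (τ i * (w i)⁻¹) * ((Q *ᵥ g) i) ^ 2 := by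
      intro i
      rw [hv i, mul_pow, inv_pow, hd2 i]
      ring
    calc ∑ i, τ i * ((M *ᵥ h) i) ^ 2
        = ∑ i, (τ i / w i) * ((Q *ᵥ g) i) ^ 2 := by
          refine Finset.sum_congr rfl fun i _ => ?_
          rw [term i, div_eq_mul_inv]
      _ ≤ ∑ i, (Real.exp (3 * ε) / μ) * ((Q *ᵥ g) i) ^ 2 :=
          Finset.sum_le_sum fun i _ => mul_le_mul_of_nonneg_right (hτdivw i) (sq_nonneg _)
      _ = (Real.exp (3 * ε) / μ) * ∑ i, ((Q *ᵥ g) i) ^ 2 := by rw [← Finset.mul_sum]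
      _ ≤ (Real.exp (3 * ε) / μ) * (c ^ 2 * (Real.exp (3 * ε) * (μ * S))) := by
          refine mul_le_mul_of_nonneg_left ?_ (by positivity)
          have h2 : ∑ i, ((Q *ᵥ g) i) ^ 2 = (Q *ᵥ g) ⬝ᵥ (Q *ᵥ g) := by
            simp [dotProduct, sq]
          rw [h2]
          calc (Q *ᵥ g) ⬝ᵥ (Q *ᵥ g) ≤ c ^ 2 * (g ⬝ᵥ g) :=
                Qx_norm hQ hQP hPsym hPproj hc0.le g
            _ ≤ c ^ 2 * (Real.exp (3 * ε) * (μ * S)) :=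
                mul_le_mul_of_nonneg_left hgg (by positivity)
      _ = Real.exp (8 * ε) * S := by
          have e8 : Real.exp (3 * ε) * (c ^ 2 * Real.exp (3 * ε)) = Real.exp (8 * ε) := by
            rw [hcdef, sq, ← Real.exp_add, ← Real.exp_add, ← Real.exp_add]
            ring_nf
          field_simp
          linear_combination S * e8 + S * congrArg Real.exp (mul_comm 8 ε)
  constructor
  · have h1 : Real.sqrt (∑ i, τ i * ((M *ᵥ h) i) ^ 2) ≤ Real.sqrt (Real.exp (8 * ε) * S) :=
      Real.sqrt_le_sqrt ha
    have h2 : Real.sqrt (Real.exp (8 * ε) * S) = Real.exp (4 * ε) * Real.sqrt S := by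
      have e8 : Real.exp (8 * ε) = Real.exp (4 * ε) ^ 2 := by
        rw [sq, ← Real.exp_add]; ring_nf
      rw [e8, Real.sqrt_mul (sq_nonneg _), Real.sqrt_sq (Real.exp_nonneg _)]
    rw [← h2]
    exact h1
  · rw [pi_norm_le_iff_of_nonneg (by positivity)]
    intro i
    rw [Real.norm_eq_abs]
    have A2 : Q i i ≤ c * (2 * τ i) :=
      le_trans (Qdiag_le hQP i) (mul_le_mul_of_nonneg_left (hPτ i) hc0.le)
    have A5 : ((Q *ᵥ g) i) ^ 2 ≤ (c * (2 * τ i)) * (c * (Real.exp (3 * ε) * (μ * S))) :=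
      le_trans (Q_cs_diag hQ i g) (mul_le_mul A2 hgQg hgQg0 (mul_nonneg hc0.le (by linarith [hτ i])))
    have hvsq : ((M *ᵥ h) i) ^ 2 ≤ 4 * S := by
      have e1 : ((M *ᵥ h) i) ^ 2 = (w i)⁻¹ * ((Q *ᵥ g) i) ^ 2 := by
        rw [hv i, mul_pow, inv_pow, hd2 i]
      have step1 : ((M *ᵥ h) i) ^ 2 ≤
          (w i)⁻¹ * ((c * (2 * τ i)) * (c * (Real.exp (3 * ε) * (μ * S)))) := by
        rw [e1]
        exact mul_le_mul_of_nonneg_left A5 (inv_nonneg.2 (hw i).le)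
      have step2 : (w i)⁻¹ * ((c * (2 * τ i)) * (c * (Real.exp (3 * ε) * (μ * S)))) =
          (2 * c ^ 2 * Real.exp (3 * ε) * μ * S) * (τ i / w i) := by
        rw [div_eq_mul_inv]; ring
      have step3 : (2 * c ^ 2 * Real.exp (3 * ε) * μ * S) * (τ i / w i) ≤
          (2 * c ^ 2 * Real.exp (3 * ε) * μ * S) * (Real.exp (3 * ε) / μ) :=
        mul_le_mul_of_nonneg_left (hτdivw i) (by positivity)
      have step4 : (2 * c ^ 2 * Real.exp (3 * ε) * μ * S) * (Real.exp (3 * ε) / μ) =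
          2 * (Real.exp (3 * ε) * (c ^ 2 * Real.exp (3 * ε))) * S := by
        field_simp
      have e8 : Real.exp (3 * ε) * (c ^ 2 * Real.exp (3 * ε)) = Real.exp (8 * ε) := by
        rw [hcdef, sq, ← Real.exp_add, ← Real.exp_add, ← Real.exp_add]
        ring_nf
      rw [step2] at step1
      rw [step4, e8] at step3
      nlinarith [hexp8, hS0]
    have habs : |(M *ᵥ h) i| = Real.sqrt (((M *ᵥ h) i) ^ 2) := (Real.sqrt_sq_eq_abs _).symm
    rw [habs]
    calc Real.sqrt (((M *ᵥ h) i) ^ 2) ≤ Real.sqrt (4 * S) := Real.sqrt_le_sqrt hvsq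
      _ = 2 * Real.sqrt S := by
          rw [show (4:ℝ) = 2 ^ 2 by norm_num, Real.sqrt_mul (sq_nonneg _),
            Real.sqrt_sq (by norm_num : (0:ℝ) ≤ 2)]
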